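/- Let V be a real inner product space, G a closed subgroup of the invertible bounded linear maps on V, E ⊆ V with A(E) ⊆ E for all A ∈ G, and F: V → ℝ with F(Ax) = F(x) for all A ∈ G and x ∈ V. Let Θ: V → ℝ be Fréchet differentiable. If a ∈ E is a local minimizer (or maximizer) of x ↦ Θ(x) + F(x) over E, then ⟨Da, Θ′(a)⟩ = 0 for every D ∈ Lie(G). -/

import Mathlib

open scoped RealInnerProductSpace Matrix Topology

theorem stmt19 {V : Type*} [NormedAddCommGroup V] [InnerProductSpace ℝ V]
    [CompleteSpace V]
    (G : Set (V →L[ℝ] V)) (hGclosed : IsClosed G)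
    (hGone : (1 : V →L[ℝ] V) ∈ G)
    (hGmul : ∀ A ∈ G, ∀ B ∈ G, A * B ∈ G)
    (hGinv : ∀ A ∈ G, ∃ B ∈ G, A * B = 1 ∧ B * A = 1)
    (E : Set V) (hE : ∀ A ∈ G, ∀ x ∈ E, A x ∈ E)
    (F : V → ℝ) (hF : ∀ A ∈ G, ∀ x : V, F (A x) = F x)
    (Θ : V → ℝ) (θ' : V → V) (hΘ : ∀ x : V, HasGradientAt Θ (θ' x) x)
    (a : V) (ha : a ∈ E)
    (hopt : IsLocalMinOn (fun x => Θ x + F x) E a ∨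
            IsLocalMaxOn (fun x => Θ x + F x) E a)
    (D : V →L[ℝ] V) (hD : ∀ t : ℝ, NormedSpace.exp (t • D) ∈ G) :
    ⟪D a, θ' a⟫ = 0 := by
  set c : ℝ → V := fun t => NormedSpace.exp (t • D) a with hc
  have hc0 : c 0 = a := by simp [hc, NormedSpace.exp_zero]
  -- derivative of c at 0 is D a
  have hexp : HasDerivAt (fun t : ℝ => NormedSpace.exp (t • D))
      (NormedSpace.exp ((0 : ℝ) • D) * D) 0 := hasDerivAt_exp_smul_const D 0
  have hcderiv : HasDerivAt c (D a) 0 := by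
    have := hexp.clm_apply (hasDerivAt_const (0 : ℝ) a)
    simpa [NormedSpace.exp_zero] using this
  -- derivative of h = fun t => Θ (c t) + F a at 0
  have hΘa : HasFDerivAt Θ ((InnerProductSpace.toDual ℝ V) (θ' a)) a :=
    (hΘ a).hasFDerivAt
  have hh : HasDerivAt (fun t => Θ (c t) + F a) (⟪θ' a, D a⟫) 0 := by
    have h1 : HasDerivAt (fun t => Θ (c t))
        ((InnerProductSpace.toDual ℝ V) (θ' a) (D a)) 0 := by
      have hΘa' : HasFDerivAt Θ ((InnerProductSpace.toDual ℝ V) (θ' a)) (c 0) :=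
        hc0 ▸ hΘa
      exact hΘa'.comp_hasDerivAt 0 hcderiv
    simpa [InnerProductSpace.toDual_apply_apply] using h1.add_const (F a)
  -- c tendsto 𝓝[E] a
  have hcE : ∀ t, c t ∈ E := fun t => hE _ (hD t) a ha
  have htend : Filter.Tendsto c (𝓝 (0 : ℝ)) (𝓝[E] a) := by
    rw [tendsto_nhdsWithin_iff]
    refine ⟨?_, Filter.Eventually.of_forall hcE⟩
    have := hcderiv.continuousAt.tendsto
    rwa [hc0] at this
  have hfc : ∀ t, Θ (c t) + F (c t) = Θ (c t) + F a := by
    intro t; rw [hF _ (hD t) a]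
  have hext : IsLocalExtr (fun t => Θ (c t) + F a) 0 := by
    rcases hopt with h | h
    · left
      have h' : ∀ᶠ x in 𝓝[E] a, Θ a + F a ≤ Θ x + F x := h
      have := htend.eventually h'
      filter_upwards [this] with t ht
      calc Θ (c 0) + F a = Θ a + F a := by rw [hc0]
        _ ≤ Θ (c t) + F (c t) := ht
        _ = Θ (c t) + F a := hfc t
    · right
      have h' : ∀ᶠ x in 𝓝[E] a, Θ x + F x ≤ Θ a + F a := h
      have := htend.eventually h'
      filter_upwards [this] with t ht
      calc Θ (c t) + F a = Θ (c t) + F (c t) := (hfc t).symm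
        _ ≤ Θ a + F a := ht
        _ = Θ (c 0) + F a := by rw [hc0]
  have := hext.hasDerivAt_eq_zero hh
  rw [real_inner_comm]
  simpa using this
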